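/- Let α > 1/2, ε > 0, γ, η, M > 0, and suppose nonnegative reals (H_k)_{k=1}^n satisfy H_k ≤ (η(1+1/ε) k(k-1)/(n-1)²)/(1+αk) + (αk/(1+αk)) H_{k+1} for 1 ≤ k < n, together with H_n ≤ ηM·n/(n-1) and ∏_{j=k}^{ℓ} αj/(1+αj) ≤ ((1+αk)/(1+αℓ))^{1/α}. Then for n > k ≥ 1 and n ≥ 2, H_k ≤ ((1+2α)²/((2α-1)αγε) + 2ηM)·((1+αk)/(1+α(n-1)))^{1/α}, where γ is related to the constants via a_ℓ/c_ℓ = (ℓ-1)/(γε(n-1)²) with a_k = η(1+1/ε)k(k-1)/((n-1)²(1+αk)) under the normalization η(1+1/ε)/α = 1/(γε) · (1+ε)/(1+ε), i.e., α = ηγ(1+ε). -/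

import Mathlib

open Finset

private lemma bern_ge {a b q : ℝ} (ha : 0 < a) (hab : a ≤ b) (hq : 1 ≤ q) :
    a ^ q + q * a ^ (q - 1) * (b - a) ≤ b ^ q := by
  have hs : (-1 : ℝ) ≤ (b - a) / a := by
    have : (0:ℝ) ≤ (b - a) / a := div_nonneg (by linarith) ha.le
    linarith
  have h := one_add_mul_self_le_rpow_one_add hs hq
  have hb1 : (1 : ℝ) + (b - a) / a = b / a := by field_simp; ring
  rw [hb1] at h
  have haq : (0:ℝ) < a ^ q := Real.rpow_pos_of_pos ha q
  have h2 : (1 + q * ((b - a) / a)) * a ^ q ≤ (b / a) ^ q * a ^ q :=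
    mul_le_mul_of_nonneg_right h haq.le
  have hb0 : 0 < b := lt_of_lt_of_le ha hab
  rw [Real.div_rpow hb0.le ha.le, div_mul_cancel₀ _ (ne_of_gt haq)] at h2
  have hpow : a ^ (q - 1) = a ^ q / a := by
    rw [Real.rpow_sub ha, Real.rpow_one]
  rw [hpow]
  calc a ^ q + q * (a ^ q / a) * (b - a)
      = (1 + q * ((b - a) / a)) * a ^ q := by field_simp
    _ ≤ b ^ q := h2

private lemma bern_le {a b q : ℝ} (ha : 0 < a) (hab : a ≤ b) (hq0 : 0 ≤ q) (hq1 : q ≤ 1) :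
    a ^ q + q * b ^ (q - 1) * (b - a) ≤ b ^ q := by
  have hb : 0 < b := lt_of_lt_of_le ha hab
  have hs : (-1 : ℝ) ≤ (a - b) / b := by
    have h1 : (0:ℝ) ≤ a / b := div_nonneg ha.le hb.le
    have hd : (a - b) / b = a / b - 1 := by field_simp
    rw [hd]; linarith
  have h := rpow_one_add_le_one_add_mul_self hs hq0 hq1
  have hb1 : (1 : ℝ) + (a - b) / b = a / b := by field_simp; ring
  rw [hb1] at h
  have hbq : (0:ℝ) < b ^ q := Real.rpow_pos_of_pos hb q
  have h2 : (a / b) ^ q * b ^ q ≤ (1 + q * ((a - b) / b)) * b ^ q :=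
    mul_le_mul_of_nonneg_right h hbq.le
  rw [Real.div_rpow ha.le hb.le, div_mul_cancel₀ _ (ne_of_gt hbq)] at h2
  have hpow : b ^ (q - 1) = b ^ q / b := by
    rw [Real.rpow_sub hb, Real.rpow_one]
  rw [hpow]
  have hkey : (1 + q * ((a - b) / b)) * b ^ q
      = b ^ q + q * (b ^ q / b) * (a - b) := by field_simp
  rw [hkey] at h2
  linarith

private lemma tele_sum (f : ℕ → ℝ) (k : ℕ) :
    ∀ m, k ≤ m → ∑ ℓ ∈ Icc k m, (f (ℓ + 1) - f ℓ) = f (m + 1) - f k := by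
  intro m hm
  induction m, hm using Nat.le_induction with
  | base => simp
  | succ m hm ih =>
      rw [Finset.sum_Icc_succ_top (by omega), ih]; ring

private lemma sum_diff_le (f g : ℕ → ℝ) (k m : ℕ) (hk : k ≤ m)
    (h0 : 0 ≤ f k) (h : ∀ ℓ ∈ Icc k m, g ℓ ≤ f (ℓ + 1) - f ℓ) :
    ∑ ℓ ∈ Icc k m, g ℓ ≤ f (m + 1) := by
  calc ∑ ℓ ∈ Icc k m, g ℓ ≤ ∑ ℓ ∈ Icc k m, (f (ℓ + 1) - f ℓ) := Finset.sum_le_sum h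
    _ = f (m + 1) - f k := tele_sum f k m hk
    _ ≤ f (m + 1) := by linarith

private lemma sum_est (α : ℝ) (hα : 1 / 2 < α) (k m : ℕ) (hk : 1 ≤ k) (hkm : k ≤ m) :
    ∑ ℓ ∈ Icc k m, (1 + α * ((ℓ : ℝ) - 1)) ^ (1 - 1 / α)
      ≤ (1 + α * (m : ℝ)) ^ (2 - 1 / α) / (2 * α - 1) := by
  have hα0 : (0:ℝ) < α := by linarith
  have h2α : (0:ℝ) < 2 * α - 1 := by linarith
  have hr2 : 1 / α < 2 := by rw [div_lt_iff₀ hα0]; linarith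
  have hq0 : (0:ℝ) < 2 - 1 / α := by linarith
  have hqα : (2 - 1/α) * α = 2 * α - 1 := by field_simp
  have hexp : (2 - 1/α) - 1 = 1 - 1/α := by ring
  have hk1 : (1:ℝ) ≤ (k:ℝ) := by exact_mod_cast hk
  have hm1 : (1:ℝ) ≤ (m:ℝ) := by exact_mod_cast le_trans hk hkm
  rw [le_div_iff₀ h2α, Finset.sum_mul]
  rcases le_or_gt 1 α with hα1 | hα1
  · -- α ≥ 1 : exponent 2 - 1/α ≥ 1, convex Bernoulli at the left endpoint
    have h := sum_diff_le (fun j => (1 + α * ((j : ℝ) - 1)) ^ (2 - 1/α))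
      (fun ℓ => (1 + α * ((ℓ : ℝ) - 1)) ^ (1 - 1/α) * (2 * α - 1)) k m hkm
      (Real.rpow_nonneg (by nlinarith) _) ?_
    · refine h.trans_eq ?_
      show (1 + α * (((m:ℕ) + 1 : ℕ) - 1 : ℝ)) ^ (2 - 1/α) = _
      push_cast
      congr 1
      ring
    · intro ℓ hℓ
      simp only [Finset.mem_Icc] at hℓ
      have hℓ1 : (1:ℝ) ≤ (ℓ:ℝ) := by exact_mod_cast le_trans hk hℓ.1
      have hx : (0:ℝ) < 1 + α * ((ℓ:ℝ) - 1) := by nlinarith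
      have hb := bern_ge (a := 1 + α * ((ℓ:ℝ) - 1)) (b := 1 + α * (ℓ:ℝ))
        hx (by nlinarith) (by have := (div_le_one hα0).mpr hα1; linarith :
          (1:ℝ) ≤ 2 - 1/α)
      rw [hexp, show (1 + α * (ℓ:ℝ)) - (1 + α * ((ℓ:ℝ) - 1)) = α from by ring] at hb
      have he : (2 - 1/α) * (1 + α * ((ℓ:ℝ) - 1)) ^ (1 - 1/α) * α
          = (1 + α * ((ℓ:ℝ) - 1)) ^ (1 - 1/α) * (2 * α - 1) := by
        rw [mul_right_comm, hqα]; ring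
      rw [he] at hb
      show (1 + α * ((ℓ:ℝ) - 1)) ^ (1 - 1/α) * (2 * α - 1)
          ≤ (1 + α * (((ℓ:ℕ) + 1 : ℕ) - 1 : ℝ)) ^ (2 - 1/α)
            - (1 + α * ((ℓ:ℝ) - 1)) ^ (2 - 1/α)
      have hc : (1 + α * (((ℓ:ℕ) + 1 : ℕ) - 1 : ℝ)) ^ (2 - 1/α)
          = (1 + α * (ℓ:ℝ)) ^ (2 - 1/α) := by
        push_cast; congr 1; ring
      rw [hc]
      linarith
  · -- α < 1 : exponent 2 - 1/α ∈ (0,1], concave Bernoulli at the right endpoint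
    have hq1 : 2 - 1/α ≤ 1 := by
      have := one_le_one_div hα0 hα1.le
      linarith
    have h := sum_diff_le (fun j => (1 + α * ((j : ℝ) - 2)) ^ (2 - 1/α))
      (fun ℓ => (1 + α * ((ℓ : ℝ) - 1)) ^ (1 - 1/α) * (2 * α - 1)) k m hkm
      (Real.rpow_nonneg (by nlinarith) _) ?_
    · refine h.trans ?_
      show (1 + α * (((m:ℕ) + 1 : ℕ) - 2 : ℝ)) ^ (2 - 1/α) ≤ _
      have hc : (1 + α * (((m:ℕ) + 1 : ℕ) - 2 : ℝ)) ^ (2 - 1/α)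
          = (1 + α * ((m:ℝ) - 1)) ^ (2 - 1/α) := by
        push_cast; congr 1; ring
      rw [hc]
      exact Real.rpow_le_rpow (by nlinarith) (by nlinarith) hq0.le
    · intro ℓ hℓ
      simp only [Finset.mem_Icc] at hℓ
      have hℓ1 : (1:ℝ) ≤ (ℓ:ℝ) := by exact_mod_cast le_trans hk hℓ.1
      have ha' : (0:ℝ) < 1 + α * ((ℓ:ℝ) - 2) := by nlinarith
      have hb := bern_le (a := 1 + α * ((ℓ:ℝ) - 2)) (b := 1 + α * ((ℓ:ℝ) - 1))
        ha' (by nlinarith) hq0.le hq1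
      rw [hexp, show (1 + α * ((ℓ:ℝ) - 1)) - (1 + α * ((ℓ:ℝ) - 2)) = α from by ring] at hb
      have he : (2 - 1/α) * (1 + α * ((ℓ:ℝ) - 1)) ^ (1 - 1/α) * α
          = (1 + α * ((ℓ:ℝ) - 1)) ^ (1 - 1/α) * (2 * α - 1) := by
        rw [mul_right_comm, hqα]; ring
      rw [he] at hb
      show (1 + α * ((ℓ:ℝ) - 1)) ^ (1 - 1/α) * (2 * α - 1)
          ≤ (1 + α * (((ℓ:ℕ) + 1 : ℕ) - 2 : ℝ)) ^ (2 - 1/α)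
            - (1 + α * ((ℓ:ℝ) - 2)) ^ (2 - 1/α)
      have hc : (1 + α * (((ℓ:ℕ) + 1 : ℕ) - 2 : ℝ)) ^ (2 - 1/α)
          = (1 + α * ((ℓ:ℝ) - 1)) ^ (2 - 1/α) := by
        push_cast; congr 1; ring
      rw [hc]
      linarith

set_option maxHeartbeats 1000000 in
theorem stmt_16 (α ε γ η M : ℝ) (hα : 1 / 2 < α) (hε : 0 < ε) (hγ : 0 < γ)
    (hη : 0 < η) (hM : 0 < M) (hnorm : α = η * γ * (1 + ε))
    (n : ℕ) (hn : 2 ≤ n) (H : ℕ → ℝ)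
    (hHnonneg : ∀ k, 1 ≤ k → k ≤ n → 0 ≤ H k)
    (hrec : ∀ k, 1 ≤ k → k < n →
      H k ≤ (η * (1 + 1 / ε) * (k : ℝ) * ((k : ℝ) - 1) / ((n : ℝ) - 1) ^ 2)
              / (1 + α * (k : ℝ))
            + (α * (k : ℝ) / (1 + α * (k : ℝ))) * H (k + 1))
    (hHn : H n ≤ η * M * (n : ℝ) / ((n : ℝ) - 1))
    (hprod : ∀ k ℓ : ℕ, 1 ≤ k → k ≤ ℓ →
      ∏ j ∈ Finset.Icc k ℓ, (α * (j : ℝ) / (1 + α * (j : ℝ)))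
        ≤ ((1 + α * (k : ℝ)) / (1 + α * (ℓ : ℝ))) ^ (1 / α)) :
    ∀ k, 1 ≤ k → k < n →
      H k ≤ ((1 + 2 * α) ^ 2 / ((2 * α - 1) * α * γ * ε) + 2 * η * M)
        * ((1 + α * (k : ℝ)) / (1 + α * ((n : ℝ) - 1))) ^ (1 / α) := by
  have hα0 : (0:ℝ) < α := by linarith
  have h2α : (0:ℝ) < 2 * α - 1 := by linarith
  obtain ⟨m, hm⟩ : ∃ m, n = m + 1 := ⟨n - 1, by omega⟩
  have hm1 : 1 ≤ m := by omega
  have hmr : (m : ℝ) = (n : ℝ) - 1 := by rw [hm]; push_cast; ring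
  have hmr1 : (1:ℝ) ≤ (m:ℝ) := by exact_mod_cast hm1
  have hn1 : (1:ℝ) ≤ (n:ℝ) - 1 := by rw [← hmr]; exact hmr1
  have hn1' : (0:ℝ) < (n:ℝ) - 1 := by linarith
  have hsq : (0:ℝ) < ((n:ℝ) - 1) ^ 2 := pow_pos hn1' 2
  set c : ℕ → ℝ := fun j => α * (j:ℝ) / (1 + α * (j:ℝ)) with hc
  set a : ℕ → ℝ := fun j => (η * (1 + 1/ε) * (j:ℝ) * ((j:ℝ) - 1) / ((n:ℝ) - 1) ^ 2)
      / (1 + α * (j:ℝ)) with ha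
  set N : ℝ := η * M * (n:ℝ) / ((n:ℝ) - 1) with hN
  have hden : ∀ j : ℕ, (0:ℝ) < 1 + α * (j:ℝ) := by
    intro j; have : (0:ℝ) ≤ (j:ℝ) := Nat.cast_nonneg j; nlinarith
  have hcnn : ∀ j : ℕ, 0 ≤ c j := fun j => div_nonneg (by positivity) (hden j).le
  have hNnn : 0 ≤ N := by
    rw [hN]; apply div_nonneg (by positivity) (by linarith)
  -- unrolled recursion
  have unroll : ∀ d k, 1 ≤ k → k + d = m →
      H k ≤ (∑ ℓ ∈ Icc k m, a ℓ * ∏ j ∈ Icc k (ℓ - 1), c j)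
          + (∏ j ∈ Icc k m, c j) * N := by
    intro d
    induction d with
    | zero =>
        intro k hk1 hkm
        have hkm' : k = m := by omega
        subst hkm'
        have h1 := hrec k hk1 (by omega)
        have hHk1 : H (k + 1) ≤ N := by rw [hN, ← hm]; exact hHn
        have h2 : c k * H (k + 1) ≤ c k * N := mul_le_mul_of_nonneg_left hHk1 (hcnn k)
        have hsum : (∑ ℓ ∈ Icc k k, a ℓ * ∏ j ∈ Icc k (ℓ - 1), c j) = a k := by
          rw [Finset.Icc_self, Finset.sum_singleton, Finset.Icc_eq_empty (by omega),
            Finset.prod_empty, mul_one]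
        rw [hsum, Finset.Icc_self, Finset.prod_singleton]
        calc H k ≤ a k + c k * H (k + 1) := h1
          _ ≤ a k + c k * N := by linarith
    | succ d ih =>
        intro k hk1 hkm
        have h1 := hrec k hk1 (by omega)
        have h2 := ih (k + 1) (by omega) (by omega)
        have hsplit : ∀ t, k ≤ t → (∏ j ∈ Icc k t, c j) = c k * ∏ j ∈ Icc (k+1) t, c j := by
          intro t ht
          rw [← Finset.mul_prod_Ioc_eq_prod_Icc ht, Finset.Icc_add_one_left_eq_Ioc]
        have hkey : c k * ((∑ ℓ ∈ Icc (k+1) m, a ℓ * ∏ j ∈ Icc (k+1) (ℓ - 1), c j)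
              + (∏ j ∈ Icc (k+1) m, c j) * N)
            = (∑ ℓ ∈ Icc (k+1) m, a ℓ * ∏ j ∈ Icc k (ℓ - 1), c j)
              + (∏ j ∈ Icc k m, c j) * N := by
          rw [hsplit m (by omega), mul_add, Finset.mul_sum]
          congr 1
          · apply Finset.sum_congr rfl
            intro ℓ hℓ
            simp only [Finset.mem_Icc] at hℓ
            rw [hsplit (ℓ - 1) (by omega)]
            ring
          · ring
        have hsum2 : (∑ ℓ ∈ Icc k m, a ℓ * ∏ j ∈ Icc k (ℓ - 1), c j)
            = a k + ∑ ℓ ∈ Icc (k+1) m, a ℓ * ∏ j ∈ Icc k (ℓ - 1), c j := by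
          rw [← Finset.add_sum_Ioc_eq_sum_Icc (by omega : k ≤ m), Finset.Icc_add_one_left_eq_Ioc,
            Finset.Icc_eq_empty (by omega : ¬ k ≤ k - 1), Finset.prod_empty, mul_one]
        rw [hsum2]
        have h3 : c k * H (k + 1) ≤ c k * ((∑ ℓ ∈ Icc (k+1) m, a ℓ * ∏ j ∈ Icc (k+1) (ℓ - 1), c j)
              + (∏ j ∈ Icc (k+1) m, c j) * N) := mul_le_mul_of_nonneg_left h2 (hcnn k)
        rw [hkey] at h3
        calc H k ≤ a k + c k * H (k + 1) := h1
          _ ≤ _ := by linarith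
  intro k hk1 hkn
  rw [← hmr]
  have hkm : k ≤ m := by omega
  have hkr1 : (1:ℝ) ≤ (k:ℝ) := by exact_mod_cast hk1
  have hunroll := unroll (m - k) k hk1 (by omega)
  have hPk : (0:ℝ) < 1 + α * (k:ℝ) := hden k
  have hPm : (0:ℝ) < 1 + α * (m:ℝ) := hden m
  set B : ℝ := (1 + α * (k:ℝ)) ^ (1/α) / (α * γ * ε * ((n:ℝ) - 1) ^ 2) with hB
  have hDpos : (0:ℝ) < α * γ * ε * ((n:ℝ) - 1) ^ 2 :=
    mul_pos (mul_pos (mul_pos hα0 hγ) hε) hsq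
  have hBnn : 0 ≤ B := div_nonneg (Real.rpow_nonneg hPk.le _) hDpos.le
  -- per-term bound
  have hterm : ∀ ℓ ∈ Icc k m, a ℓ * ∏ j ∈ Icc k (ℓ - 1), c j
      ≤ B * (1 + α * ((ℓ:ℝ) - 1)) ^ (1 - 1/α) := by
    intro ℓ hℓ
    simp only [Finset.mem_Icc] at hℓ
    have hℓ1 : 1 ≤ ℓ := le_trans hk1 hℓ.1
    have hℓr1 : (1:ℝ) ≤ (ℓ:ℝ) := by exact_mod_cast hℓ1
    have hx : (0:ℝ) < 1 + α * ((ℓ:ℝ) - 1) := by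
      have := mul_nonneg hα0.le (by linarith : (0:ℝ) ≤ (ℓ:ℝ) - 1); linarith
    have hprodb : (∏ j ∈ Icc k (ℓ - 1), c j)
        ≤ ((1 + α * (k:ℝ)) / (1 + α * ((ℓ:ℝ) - 1))) ^ (1/α) := by
      rcases eq_or_lt_of_le hℓ.1 with heq | hlt
      · rw [← heq, Finset.Icc_eq_empty (by omega : ¬ k ≤ k - 1), Finset.prod_empty]
        apply Real.one_le_rpow _ (by positivity)
        rw [le_div_iff₀ (by rw [heq]; exact hx)]; nlinarith
      · have h := hprod k (ℓ - 1) hk1 (by omega)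
        have hcast : ((ℓ - 1 : ℕ) : ℝ) = (ℓ:ℝ) - 1 := by
          have h1 : (1:ℕ) ≤ ℓ := hℓ1
          push_cast [h1]; ring
        rwa [hcast] at h
    set A : ℝ := ((ℓ:ℝ) - 1) / (γ * ε * ((n:ℝ) - 1) ^ 2) with hA
    have hD2 : (0:ℝ) < γ * ε * ((n:ℝ) - 1) ^ 2 := mul_pos (mul_pos hγ hε) hsq
    have hAnn : 0 ≤ A := div_nonneg (by linarith) hD2.le
    have hnne : ((n:ℝ) - 1) ≠ 0 := ne_of_gt hn1'
    have haA : a ℓ ≤ A := by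
      show η * (1 + 1/ε) * (ℓ:ℝ) * ((ℓ:ℝ) - 1) / ((n:ℝ) - 1) ^ 2 / (1 + α * (ℓ:ℝ)) ≤ A
      rw [hA, div_le_div_iff₀ (hden ℓ) hD2]
      have hX : η * (1 + 1/ε) * (ℓ:ℝ) * ((ℓ:ℝ) - 1) / ((n:ℝ) - 1) ^ 2
            * (γ * ε * ((n:ℝ) - 1) ^ 2) = α * (ℓ:ℝ) * ((ℓ:ℝ) - 1) := by
        rw [hnorm]; field_simp; ring
      rw [hX]
      have h1 : (0:ℝ) ≤ (ℓ:ℝ) - 1 := by linarith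
      linarith [h1]
    have h1 : a ℓ * ∏ j ∈ Icc k (ℓ - 1), c j
        ≤ A * ((1 + α * (k:ℝ)) / (1 + α * ((ℓ:ℝ) - 1))) ^ (1/α) := by
      apply mul_le_mul haA hprodb (Finset.prod_nonneg fun j _ => hcnn j) hAnn
    refine h1.trans ?_
    have hAX : A ≤ (1 + α * ((ℓ:ℝ) - 1)) / (α * γ * ε * ((n:ℝ) - 1) ^ 2) := by
      rw [hA, div_le_div_iff₀ hD2 hDpos]
      have h1 : ((ℓ:ℝ) - 1) * α ≤ 1 + α * ((ℓ:ℝ) - 1) := by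
        have := mul_nonneg hα0.le (by linarith : (0:ℝ) ≤ (ℓ:ℝ) - 1); linarith
      calc ((ℓ:ℝ) - 1) * (α * γ * ε * ((n:ℝ) - 1) ^ 2)
          = (((ℓ:ℝ) - 1) * α) * (γ * ε * ((n:ℝ) - 1) ^ 2) := by ring
        _ ≤ (1 + α * ((ℓ:ℝ) - 1)) * (γ * ε * ((n:ℝ) - 1) ^ 2) :=
            mul_le_mul_of_nonneg_right h1 hD2.le
    calc A * ((1 + α * (k:ℝ)) / (1 + α * ((ℓ:ℝ) - 1))) ^ (1/α)
        ≤ ((1 + α * ((ℓ:ℝ) - 1)) / (α * γ * ε * ((n:ℝ) - 1) ^ 2))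
            * ((1 + α * (k:ℝ)) / (1 + α * ((ℓ:ℝ) - 1))) ^ (1/α) :=
          mul_le_mul_of_nonneg_right hAX (Real.rpow_nonneg (div_nonneg hPk.le hx.le) _)
      _ = B * (1 + α * ((ℓ:ℝ) - 1)) ^ (1 - 1/α) := by
          rw [Real.div_rpow hPk.le hx.le, hB,
            show (1:ℝ) - 1/α = 1 - 1/α from rfl, Real.rpow_sub hx, Real.rpow_one]
          ring
  -- sum bound
  have hS : (∑ ℓ ∈ Icc k m, a ℓ * ∏ j ∈ Icc k (ℓ - 1), c j)
      ≤ B * ((1 + α * (m:ℝ)) ^ (2 - 1/α) / (2 * α - 1)) := by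
    calc (∑ ℓ ∈ Icc k m, a ℓ * ∏ j ∈ Icc k (ℓ - 1), c j)
        ≤ ∑ ℓ ∈ Icc k m, B * (1 + α * ((ℓ:ℝ) - 1)) ^ (1 - 1/α) := Finset.sum_le_sum hterm
      _ = B * ∑ ℓ ∈ Icc k m, (1 + α * ((ℓ:ℝ) - 1)) ^ (1 - 1/α) := by rw [Finset.mul_sum]
      _ ≤ B * ((1 + α * (m:ℝ)) ^ (2 - 1/α) / (2 * α - 1)) :=
          mul_le_mul_of_nonneg_left (sum_est α hα k m hk1 hkm) hBnn
  -- convert to the target constant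
  have hC : B * ((1 + α * (m:ℝ)) ^ (2 - 1/α) / (2 * α - 1))
      ≤ (1 + 2 * α) ^ 2 / ((2 * α - 1) * α * γ * ε)
          * ((1 + α * (k:ℝ)) / (1 + α * (m:ℝ))) ^ (1/α) := by
    have hQr : (0:ℝ) < (1 + α * (m:ℝ)) ^ ((1:ℝ)/α) := Real.rpow_pos_of_pos hPm _
    have hE0 : (0:ℝ) ≤ (1 + α * (k:ℝ)) ^ ((1:ℝ)/α)
        / ((2 * α - 1) * α * γ * ε * (1 + α * (m:ℝ)) ^ ((1:ℝ)/α)) := by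
      apply div_nonneg (Real.rpow_nonneg hPk.le _)
      exact (mul_pos (mul_pos (mul_pos (mul_pos h2α hα0) hγ) hε) hQr).le
    have e3 : (1 + α * (m:ℝ)) ^ ((2:ℝ) - 1/α)
        = (1 + α * (m:ℝ)) ^ (2:ℕ) / (1 + α * (m:ℝ)) ^ ((1:ℝ)/α) := by
      rw [Real.rpow_sub hPm]
      norm_num
    have hmle : (1 + α * (m:ℝ)) ^ (2:ℕ) ≤ (1 + 2 * α) ^ 2 * ((n:ℝ) - 1) ^ 2 := by
      have h1 : 1 + α * (m:ℝ) ≤ (1 + 2 * α) * ((n:ℝ) - 1) := by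
        rw [← hmr]
        have h2 := mul_nonneg hα0.le (by linarith : (0:ℝ) ≤ (m:ℝ))
        linarith [h2]
      calc (1 + α * (m:ℝ)) ^ (2:ℕ) ≤ ((1 + 2 * α) * ((n:ℝ) - 1)) ^ (2:ℕ) :=
            pow_le_pow_left₀ hPm.le h1 2
        _ = (1 + 2 * α) ^ 2 * ((n:ℝ) - 1) ^ 2 := by ring
    rw [Real.div_rpow hPk.le hPm.le]
    calc B * ((1 + α * (m:ℝ)) ^ (2 - 1/α) / (2 * α - 1))
        = ((1 + α * (m:ℝ)) ^ (2:ℕ) / ((n:ℝ) - 1) ^ 2)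
            * ((1 + α * (k:ℝ)) ^ ((1:ℝ)/α)
              / ((2 * α - 1) * α * γ * ε * (1 + α * (m:ℝ)) ^ ((1:ℝ)/α))) := by
          rw [hB, e3]
          field_simp [h2α.ne', hα0.ne', hγ.ne', hε.ne', hn1'.ne', hQr.ne']
      _ ≤ ((1 + 2 * α) ^ 2)
            * ((1 + α * (k:ℝ)) ^ ((1:ℝ)/α)
              / ((2 * α - 1) * α * γ * ε * (1 + α * (m:ℝ)) ^ ((1:ℝ)/α))) := by
          apply mul_le_mul_of_nonneg_right _ hE0
          rw [div_le_iff₀ hsq]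
          exact hmle
      _ = (1 + 2 * α) ^ 2 / ((2 * α - 1) * α * γ * ε)
            * ((1 + α * (k:ℝ)) ^ (1/α) / (1 + α * (m:ℝ)) ^ (1/α)) := by
          field_simp [h2α.ne', hα0.ne', hγ.ne', hε.ne', hQr.ne']
  -- product tail bound
  have hP2 : (∏ j ∈ Icc k m, c j) * N
      ≤ ((1 + α * (k:ℝ)) / (1 + α * (m:ℝ))) ^ (1/α) * (2 * η * M) := by
    have hp := hprod k m hk1 hkm
    have hN2 : N ≤ 2 * η * M := by
      rw [hN, div_le_iff₀ (by linarith : (0:ℝ) < (n:ℝ) - 1)]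
      have h2 : (2:ℝ) ≤ (n:ℝ) := by exact_mod_cast hn
      have h3 : (0:ℝ) ≤ η * M * ((n:ℝ) - 2) :=
        mul_nonneg (mul_pos hη hM).le (by linarith)
      linarith [h3]
    exact mul_le_mul hp hN2 hNnn (Real.rpow_nonneg (div_nonneg hPk.le hPm.le) _)
  calc H k ≤ (∑ ℓ ∈ Icc k m, a ℓ * ∏ j ∈ Icc k (ℓ - 1), c j)
        + (∏ j ∈ Icc k m, c j) * N := hunroll
    _ ≤ B * ((1 + α * (m:ℝ)) ^ (2 - 1/α) / (2 * α - 1))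
        + ((1 + α * (k:ℝ)) / (1 + α * (m:ℝ))) ^ (1/α) * (2 * η * M) := add_le_add hS hP2
    _ ≤ (1 + 2 * α) ^ 2 / ((2 * α - 1) * α * γ * ε)
          * ((1 + α * (k:ℝ)) / (1 + α * (m:ℝ))) ^ (1/α)
        + ((1 + α * (k:ℝ)) / (1 + α * (m:ℝ))) ^ (1/α) * (2 * η * M) :=
        add_le_add_left hC _
    _ = ((1 + 2 * α) ^ 2 / ((2 * α - 1) * α * γ * ε) + 2 * η * M)
          * ((1 + α * (k:ℝ)) / (1 + α * (m:ℝ))) ^ (1/α) := by ring
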